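/- arXiv:2111.08077 — 7 statements merged into one kernel-verified Lean document; each statement's English description precedes it below -/
import Mathlib

section
/- Every 3-uniform hypergraph on 5 vertices has a non-identity automorphism. -/
namespace Stmt7Aux

def W : Nat := 5514011951183149045578305743432577827605023959351773722575351191336368139162183858314863242873053038537185026223806866837992410942485329686477829760785973882094964428789276892013352066266206671513989674934615876161567751331172463754271889864848198418832486819023288568693261665046901183598521532623042418508981444367513209524674129243919157410605045541919276025205253386636927816227838147784669860955999178588811176548818453286892672089222423478543693685168753217664454222305920034294211821894701290936503089098346405613706696578148315736423771914164454000478876668683267772865427982917062838594564543543157820252210009961275445182049734093361881501217419891217089339051612621801378537773068061158938373890144476998140932607695607777840692096904351725566770122112404624494478906361403959490254248357102295965064014205492942894095052757836185671928796614509805531416461798756917503833089912729930929157840196728593530181256413252907330940380528931824828931614279434250878626585340620071994255737128610238422079112640742092097798247907971744440841733398513265641071124887499543896197891547428177426958817698621896049836992091419967017212971581148179217332071236219879987065651061565985135428937532061405873271351594467739033587957087173211481328666480416041220514141192865474090833157171903914334161548363612709334404380648848276634460044232813276476537605965520735718878239226385160993485198088494163725246096135443652786507821876473855172252949885171723075511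954833750893828889771780403292832885056269361150274096608445632348160
def IP : List Nat := [641083073040, 378520483680, 285352736790, 210559603335, 590395610160, 517915018515, 448707703380, 650792743425, 646261788690, 654568538400, 637055558145, 632524603410, 640831353120, 173165250915, 103706277780, 378268763760, 156503644470, 10537547865, 276794267160, 81710449815, 5203326345, 206532088440, 590143890240, 509356548885, 444680188485]

def trip : List (Finset (Fin 5)) := [({0,1,2} : Finset (Fin 5)), ({0,1,3} : Finset (Fin 5)), ({0,1,4} : Finset (Fin 5)), ({0,2,3} : Finset (Fin 5)), ({0,2,4} : Finset (Fin 5)), ({0,3,4} : Finset (Fin 5)), ({1,2,3} : Finset (Fin 5)), ({1,2,4} : Finset (Fin 5)), ({1,3,4} : Finset (Fin 5)), ({2,3,4} : Finset (Fin 5))]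

def invols : List (Equiv.Perm (Fin 5)) := [
  Equiv.swap 0 1, Equiv.swap 0 2, Equiv.swap 0 3, Equiv.swap 0 4, Equiv.swap 1 2, Equiv.swap 1 3, Equiv.swap 1 4, Equiv.swap 2 3, Equiv.swap 2 4, Equiv.swap 3 4, Equiv.swap 0 1 * Equiv.swap 2 3, Equiv.swap 0 1 * Equiv.swap 2 4, Equiv.swap 0 1 * Equiv.swap 3 4, Equiv.swap 0 2 * Equiv.swap 1 3, Equiv.swap 0 2 * Equiv.swap 1 4, Equiv.swap 0 2 * Equiv.swap 3 4, Equiv.swap 0 3 * Equiv.swap 1 2, Equiv.swap 0 3 * Equiv.swap 1 4, Equiv.swap 0 3 * Equiv.swap 2 4, Equiv.swap 0 4 * Equiv.swap 1 2, Equiv.swap 0 4 * Equiv.swap 1 3, Equiv.swap 0 4 * Equiv.swap 2 3, Equiv.swap 1 2 * Equiv.swap 3 4, Equiv.swap 1 3 * Equiv.swap 2 4, Equiv.swap 1 4 * Equiv.swap 2 3]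

def bs (M : Finset (Finset (Fin 5))) : List Bool := [decide (({0,1,2} : Finset (Fin 5)) ∈ M), decide (({0,1,3} : Finset (Fin 5)) ∈ M), decide (({0,1,4} : Finset (Fin 5)) ∈ M), decide (({0,2,3} : Finset (Fin 5)) ∈ M), decide (({0,2,4} : Finset (Fin 5)) ∈ M), decide (({0,3,4} : Finset (Fin 5)) ∈ M), decide (({1,2,3} : Finset (Fin 5)) ∈ M), decide (({1,2,4} : Finset (Fin 5)) ∈ M), decide (({1,3,4} : Finset (Fin 5)) ∈ M), decide (({2,3,4} : Finset (Fin 5)) ∈ M)]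

def enc (M : Finset (Finset (Fin 5))) : Nat :=
  (bs M).foldr (fun (b : Bool) (n : Nat) => 2*n + b.toNat) 0

set_option maxHeartbeats 4000000 in
theorem core : ∀ a ∈ List.range 32, ∀ b ∈ List.range 32,
    (W >>> (5*(32*a+b))) % 32 < 25 ∧ ∀ i ∈ List.range 10,
    ((IP.getD ((W >>> (5*(32*a+b))) % 32) 0 >>> (4*i)) % 16 < 10 ∧
     (32*a+b).testBit i
       = (32*a+b).testBit ((IP.getD ((W >>> (5*(32*a+b))) % 32) 0 >>> (4*i)) % 16)) := by
  decide

theorem L1 : ∀ (b0 b1 b2 b3 b4 b5 b6 b7 b8 b9 : Bool), ∀ i ∈ List.range 10,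
    (([b0, b1, b2, b3, b4, b5, b6, b7, b8, b9] : List Bool).foldr (fun (b : Bool) (n : Nat) => 2*n + b.toNat) 0).testBit i
      = ([b0, b1, b2, b3, b4, b5, b6, b7, b8, b9] : List Bool).getD i false := by decide

theorem L3 : ∀ (b0 b1 b2 b3 b4 b5 b6 b7 b8 b9 : Bool),
    (([b0, b1, b2, b3, b4, b5, b6, b7, b8, b9] : List Bool).foldr (fun (b : Bool) (n : Nat) => 2*n + b.toNat) 0) < 1024 := by decide

theorem L_act : ∀ j ∈ List.range 25, ∀ i ∈ List.range 10,
    (trip.getD i ∅).image ⇑(invols.getD j 1) = trip.getD ((IP.getD j 0 >>> (4*i)) % 16) ∅ := by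
  decide

theorem L_ne : ∀ j ∈ List.range 25, invols.getD j 1 ≠ 1 := by decide

theorem L_trip : ∀ E ∈ Finset.univ.filter (fun E : Finset (Fin 5) => E.card = 3),
    ∃ i ∈ List.range 10, E = trip.getD i ∅ := by decide

theorem L2 (M : Finset (Finset (Fin 5))) : ∀ i ∈ List.range 10,
    ((bs M).getD i false = true ↔ trip.getD i ∅ ∈ M) := by
  intro i hi
  have h : i < 10 := List.mem_range.mp hi
  interval_cases i <;> simp [bs, trip]

set_option maxHeartbeats 2000000 in
theorem fin5 (M : Finset (Finset (Fin 5))) (hM : ∀ E ∈ M, E.card = 3) :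
    ∃ φ : Equiv.Perm (Fin 5), φ ≠ 1 ∧ ∀ E : Finset (Fin 5), E ∈ M ↔ E.image ⇑φ ∈ M := by
  have hm1024 : enc M < 1024 := by unfold enc bs; exact L3 _ _ _ _ _ _ _ _ _ _
  have hmab : 32 * (enc M / 32) + enc M % 32 = enc M := Nat.div_add_mod (enc M) 32
  have ha : enc M / 32 ∈ List.range 32 :=
    List.mem_range.mpr (Nat.div_lt_of_lt_mul (by omega))
  have hb : enc M % 32 ∈ List.range 32 := List.mem_range.mpr (Nat.mod_lt _ (by norm_num))
  have hcore := core _ ha _ hb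
  rw [hmab] at hcore
  obtain ⟨hj25, hcore⟩ := hcore
  have hjr : (W >>> (5*enc M)) % 32 ∈ List.range 25 := List.mem_range.mpr hj25
  refine ⟨invols.getD ((W >>> (5*enc M)) % 32) 1, L_ne _ hjr, ?_⟩
  intro E
  by_cases hE3 : E.card = 3
  · obtain ⟨i, hi, hEi⟩ := L_trip E (by simp [hE3])
    obtain ⟨hi10, hbit⟩ := hcore i hi
    have hi'r : (IP.getD ((W >>> (5*enc M)) % 32) 0 >>> (4*i)) % 16 ∈ List.range 10 :=
      List.mem_range.mpr hi10
    have h1 : (enc M).testBit i = (bs M).getD i false := by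
      unfold enc bs; exact L1 _ _ _ _ _ _ _ _ _ _ i hi
    have h1' : (enc M).testBit ((IP.getD ((W >>> (5*enc M)) % 32) 0 >>> (4*i)) % 16)
        = (bs M).getD ((IP.getD ((W >>> (5*enc M)) % 32) 0 >>> (4*i)) % 16) false := by
      unfold enc bs; exact L1 _ _ _ _ _ _ _ _ _ _ _ hi'r
    have h2 := L2 M i hi
    have h2' := L2 M _ hi'r
    have hact := L_act _ hjr i hi
    rw [hEi, hact, ← h2, ← h2', ← h1, ← h1', hbit]
  · constructor
    · intro h; exact absurd (hM E h) hE3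
    · intro h
      have hc := hM _ h
      rw [Finset.card_image_of_injective _ (Equiv.injective _)] at hc
      exact absurd hc hE3

end Stmt7Aux

/-- Every 3-uniform hypergraph on 5 vertices has a non-identity
automorphism. -/
theorem stmt_7 (V : Type) [Fintype V] [DecidableEq V] (hV : Fintype.card V = 5)
    (M : Finset (Finset V)) (hM : ∀ E ∈ M, E.card = 3) :
    ∃ φ : Equiv.Perm V, φ ≠ 1 ∧ ∀ E : Finset V, E ∈ M ↔ E.image ⇑φ ∈ M := by
  let e : V ≃ Fin 5 := Fintype.equivFinOfCardEq hV
  set M' := M.image (Finset.image ⇑e) with hM'def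
  have hM' : ∀ E ∈ M', E.card = 3 := by
    intro E hE
    obtain ⟨F, hF, rfl⟩ := Finset.mem_image.mp hE
    rw [Finset.card_image_of_injective _ e.injective]
    exact hM F hF
  obtain ⟨ψ, hψ1, hψ2⟩ := Stmt7Aux.fin5 M' hM'
  have hmem : ∀ F : Finset V, F ∈ M ↔ F.image ⇑e ∈ M' := by
    intro F
    constructor
    · intro h; exact Finset.mem_image_of_mem _ h
    · intro h
      obtain ⟨G, hG, hGF⟩ := Finset.mem_image.mp h
      rwa [← Finset.image_injective e.injective hGF]
  refine ⟨(e.trans ψ).trans e.symm, ?_, ?_⟩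
  · intro h
    apply hψ1
    ext x
    have h' := Equiv.ext_iff.mp h (e.symm x)
    simp only [Equiv.trans_apply, Equiv.Perm.one_apply, Equiv.apply_symm_apply] at h'
    exact congrArg Fin.val (e.symm.injective h')
  · intro E
    have himg : (E.image ⇑e).image ⇑ψ = (E.image ⇑((e.trans ψ).trans e.symm)).image ⇑e := by
      rw [Finset.image_image, Finset.image_image]
      simp only [Function.comp_def, Equiv.trans_apply, Equiv.apply_symm_apply]
    rw [hmem E, hψ2 (E.image ⇑e), himg, ← hmem]
end

section
/- For every integer k ≥ 4, there exists an asymmetric k-uniform hypergraph on k+2 vertices; combined with the fact that no asymmetric k-uniform hypergraph on k+1 vertices or on 2 ≤ n ≤ k vertices exists, the minimum number of vertices of an asymmetric k-uniform hypergraph (with at least 2 vertices) is k+2. -/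
def adjN (a b : ℕ) : Prop :=
  a + 1 = b ∨ b + 1 = a ∨ (a = 1 ∧ b = 3) ∨ (a = 3 ∧ b = 1)

def adjP (m : ℕ) (x y : Fin m) : Prop := adjN x.1 y.1

instance (a b : ℕ) : Decidable (adjN a b) := by unfold adjN; infer_instance
instance (m : ℕ) (x y : Fin m) : Decidable (adjP m x y) := by unfold adjP; infer_instance

def edgesG (m : ℕ) : Finset (Finset (Fin m)) :=
  Finset.univ.filter (fun E => ∃ x y : Fin m, E = {x, y} ∧ adjP m x y)

lemma adjP_symm {m : ℕ} {x y : Fin m} (h : adjP m x y) : adjP m y x := by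
  unfold adjP adjN at *; omega

lemma adjP_ne {m : ℕ} {x y : Fin m} (h : adjP m x y) : x ≠ y := by
  intro he; subst he; unfold adjP adjN at h; omega

lemma mem_edgesG {m : ℕ} (x y : Fin m) : {x, y} ∈ edgesG m ↔ adjP m x y := by
  simp only [edgesG, Finset.mem_filter, Finset.mem_univ, true_and]
  constructor
  · rintro ⟨a, b, hab, h⟩
    have hne : a ≠ b := adjP_ne h
    have ha : a ∈ ({x, y} : Finset (Fin m)) := by rw [hab]; simp
    have hb : b ∈ ({x, y} : Finset (Fin m)) := by rw [hab]; simp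
    have hx : x ∈ ({a, b} : Finset (Fin m)) := by rw [← hab]; simp
    have hy : y ∈ ({a, b} : Finset (Fin m)) := by rw [← hab]; simp
    simp only [Finset.mem_insert, Finset.mem_singleton] at ha hb hx hy
    rcases ha with rfl | rfl
    · rcases hb with rfl | rfl
      · rcases hy with rfl | rfl
        · exact h
        · exact h
      · exact h
    · rcases hb with rfl | rfl
      · exact adjP_symm h
      · rcases hx with rfl | rfl
        · exact adjP_symm h
        · exact adjP_symm h
  · intro h; exact ⟨x, y, rfl, h⟩

lemma image_compl_perm {m : ℕ} (φ : Equiv.Perm (Fin m)) (P : Finset (Fin m)) :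
    Pᶜ.image φ = (P.image φ)ᶜ := by
  ext y
  simp only [Finset.mem_image, Finset.mem_compl]
  constructor
  · rintro ⟨z, hz, rfl⟩ ⟨w, hw, hwz⟩
    exact hz (by rwa [← φ.injective hwz])
  · intro h
    exact ⟨φ.symm y, fun hm => h ⟨φ.symm y, hm, φ.apply_symm_apply y⟩, φ.apply_symm_apply y⟩

def hypM (m : ℕ) : Finset (Finset (Fin m)) := (edgesG m).image compl

lemma mem_hypM {m : ℕ} (E : Finset (Fin m)) : E ∈ hypM m ↔ Eᶜ ∈ edgesG m := by
  simp only [hypM, Finset.mem_image]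
  constructor
  · rintro ⟨P, hP, rfl⟩; rwa [compl_compl]
  · intro h; exact ⟨Eᶜ, h, compl_compl E⟩

/-- triangle property over ℕ, relative to a "value permutation" -/
def triN (m : ℕ) (i : ℕ) : Prop :=
  ∃ y z, y < m ∧ z < m ∧ adjN i y ∧ adjN y z ∧ adjN i z

lemma triN_val {m i : ℕ} (h : triN m i) : i = 1 ∨ i = 2 ∨ i = 3 := by
  obtain ⟨y, z, _, _, h1, h2, h3⟩ := h
  unfold adjN at h1 h2 h3; omega

lemma triN_of {m : ℕ} (hm : 6 ≤ m) {i : ℕ} (h : i = 1 ∨ i = 2 ∨ i = 3) :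
    triN m i := by
  rcases h with rfl | rfl | rfl
  · exact ⟨2, 3, by omega, by omega, by unfold adjN; omega, by unfold adjN; omega,
      by unfold adjN; omega⟩
  · exact ⟨1, 3, by omega, by omega, by unfold adjN; omega, by unfold adjN; omega,
      by unfold adjN; omega⟩
  · exact ⟨1, 2, by omega, by omega, by unfold adjN; omega, by unfold adjN; omega,
      by unfold adjN; omega⟩

lemma hyp_asym {m : ℕ} (hm : 6 ≤ m) (φ : Equiv.Perm (Fin m))
    (H : ∀ E : Finset (Fin m), E ∈ hypM m ↔ E.image ⇑φ ∈ hypM m) : φ = 1 := by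
  have hadj : ∀ x y : Fin m, adjP m x y ↔ adjP m (φ x) (φ y) := by
    intro x y
    have h := H ({x, y}ᶜ)
    rw [image_compl_perm, mem_hypM, mem_hypM, compl_compl, compl_compl] at h
    have himg : ({x, y} : Finset (Fin m)).image ⇑φ = {φ x, φ y} := by
      simp [Finset.image_insert]
    rw [himg, mem_edgesG, mem_edgesG] at h
    exact h
  -- pass to a function on ℕ
  set ψ : ℕ → ℕ := fun i => if h : i < m then (φ ⟨i, h⟩).1 else i with hψ
  have hψval : ∀ (i : ℕ) (h : i < m), ψ i = (φ ⟨i, h⟩).1 := by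
    intro i h; simp [hψ, dif_pos h]
  have hψlt : ∀ i, i < m → ψ i < m := by
    intro i h; rw [hψval i h]; exact (φ ⟨i, h⟩).isLt
  have hadjN : ∀ i j, i < m → j < m → (adjN i j ↔ adjN (ψ i) (ψ j)) := by
    intro i j hi hj
    rw [hψval i hi, hψval j hj]
    exact hadj ⟨i, hi⟩ ⟨j, hj⟩
  have hinjN : ∀ i j, i < m → j < m → ψ i = ψ j → i = j := by
    intro i j hi hj h
    rw [hψval i hi, hψval j hj] at h
    have : φ ⟨i, hi⟩ = φ ⟨j, hj⟩ := Fin.ext h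
    exact congrArg Fin.val (φ.injective this)
  have hsurj : ∀ j, j < m → ∃ i, i < m ∧ ψ i = j := by
    intro j hj
    refine ⟨(φ.symm ⟨j, hj⟩).1, (φ.symm ⟨j, hj⟩).isLt, ?_⟩
    rw [hψval _ (φ.symm ⟨j, hj⟩).isLt]
    have : (⟨(φ.symm ⟨j, hj⟩).1, (φ.symm ⟨j, hj⟩).isLt⟩ : Fin m) = φ.symm ⟨j, hj⟩ :=
      Fin.eta _ _
    rw [this, φ.apply_symm_apply]
  have htri : ∀ i, i < m → triN m i → triN m (ψ i) := by
    rintro i hi ⟨y, z, hy, hz, h1, h2, h3⟩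
    exact ⟨ψ y, ψ z, hψlt y hy, hψlt z hz, (hadjN i y hi hy).mp h1,
      (hadjN y z hy hz).mp h2, (hadjN i z hi hz).mp h3⟩
  -- ψ fixes 2
  have h2 : ψ 2 = 2 := by
    have hv := triN_val (htri 2 (by omega) (triN_of hm (by omega)))
    have hSφ : ∀ y, y < m → adjN (ψ 2) y → triN m y := by
      intro y hy hay
      obtain ⟨i, hi, rfl⟩ := hsurj y hy
      have : adjN 2 i := (hadjN 2 i (by omega) hi).mpr hay
      have hiv : i = 1 ∨ i = 3 := by unfold adjN at this; omega
      exact htri i hi (triN_of hm (by omega))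
    rcases hv with hv | hv | hv
    · have := triN_val (hSφ 0 (by omega) (by rw [hv]; unfold adjN; omega))
      omega
    · exact hv
    · have := triN_val (hSφ 4 (by omega) (by rw [hv]; unfold adjN; omega))
      omega
  -- ψ fixes 1
  have h1 : ψ 1 = 1 := by
    have hv := triN_val (htri 1 (by omega) (triN_of hm (by omega)))
    rcases hv with hv | hv | hv
    · exact hv
    · exact absurd (hinjN 1 2 (by omega) (by omega) (by omega)) (by omega)
    · exfalso
      -- ψ 1 = 3, but 1 has a pendant neighbour and 3 does not
      have hQ : ∃ y, y < m ∧ adjN (ψ 1) y ∧ ∀ z, z < m → adjN y z → z = ψ 1 := by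
        refine ⟨ψ 0, hψlt 0 (by omega), (hadjN 1 0 (by omega) (by omega)).mp
          (by unfold adjN; omega), ?_⟩
        intro z hz haz
        obtain ⟨i, hi, rfl⟩ := hsurj z hz
        have : adjN 0 i := (hadjN 0 i (by omega) hi).mpr haz
        have : i = 1 := by unfold adjN at this; omega
        rw [this]
      obtain ⟨y, hy, hy1, hy2⟩ := hQ
      rw [hv] at hy1 hy2
      have hyv : y = 1 ∨ y = 2 ∨ y = 4 := by unfold adjN at hy1; omega
      rcases hyv with rfl | rfl | rfl
      · have := hy2 0 (by omega) (by unfold adjN; omega); omega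
      · have := hy2 1 (by omega) (by unfold adjN; omega); omega
      · have := hy2 5 (by omega) (by unfold adjN; omega); omega
  -- ψ fixes 3
  have h3 : ψ 3 = 3 := by
    have hv := triN_val (htri 3 (by omega) (triN_of hm (by omega)))
    rcases hv with hv | hv | hv
    · exact absurd (hinjN 3 1 (by omega) (by omega) (by omega)) (by omega)
    · exact absurd (hinjN 3 2 (by omega) (by omega) (by omega)) (by omega)
    · exact hv
  -- ψ fixes 0
  have h0 : ψ 0 = 0 := by
    have hb : adjN (ψ 1) (ψ 0) := (hadjN 1 0 (by omega) (by omega)).mp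
      (by unfold adjN; omega)
    rw [h1] at hb
    have : ψ 0 = 0 ∨ ψ 0 = 2 ∨ ψ 0 = 3 := by unfold adjN at hb; omega
    rcases this with h | h | h
    · exact h
    · exact absurd (hinjN 0 2 (by omega) (by omega) (by omega)) (by omega)
    · exact absurd (hinjN 0 3 (by omega) (by omega) (by omega)) (by omega)
  -- ψ fixes 4
  have h4 : ψ 4 = 4 := by
    have hb : adjN (ψ 3) (ψ 4) := (hadjN 3 4 (by omega) (by omega)).mp
      (by unfold adjN; omega)
    rw [h3] at hb
    have : ψ 4 = 4 ∨ ψ 4 = 2 ∨ ψ 4 = 1 := by unfold adjN at hb; omega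
    rcases this with h | h | h
    · exact h
    · exact absurd (hinjN 4 2 (by omega) (by omega) (by omega)) (by omega)
    · exact absurd (hinjN 4 1 (by omega) (by omega) (by omega)) (by omega)
  have key : ∀ j, j < m → ψ j = j := by
    intro j
    induction j using Nat.strong_induction_on with
    | _ j ih =>
      intro hj
      match j with
      | 0 => exact h0
      | 1 => exact h1
      | 2 => exact h2
      | 3 => exact h3
      | 4 => exact h4
      | (j+5) =>
        have e1 : ψ (j+4) = j + 4 := ih (j+4) (by omega) (by omega)
        have e2 : ψ (j+3) = j + 3 := ih (j+3) (by omega) (by omega)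
        have hb : adjN (ψ (j+4)) (ψ (j+5)) :=
          (hadjN (j+4) (j+5) (by omega) hj).mp (by unfold adjN; omega)
        rw [e1] at hb
        have : ψ (j+5) = j + 5 ∨ ψ (j+5) = j + 3 := by unfold adjN at hb; omega
        rcases this with h | h
        · exact h
        · exact absurd (hinjN (j+5) (j+3) hj (by omega) (by omega)) (by omega)
  ext x
  have h := key x.1 x.isLt
  rw [hψval x.1 x.isLt] at h
  simp only [Fin.eta] at h
  simp [Fin.ext_iff, h]

/-- For every k ≥ 4, the minimum number of vertices (≥ 2) of an
asymmetric k-uniform hypergraph is k+2. -/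
theorem stmt_9 (k : ℕ) (hk : 4 ≤ k) :
    IsLeast {n : ℕ | 2 ≤ n ∧ ∃ M : Finset (Finset (Fin n)),
      (∀ E ∈ M, E.card = k) ∧
      ∀ φ : Equiv.Perm (Fin n),
        (∀ E : Finset (Fin n), E ∈ M ↔ E.image ⇑φ ∈ M) → φ = 1} (k + 2) := by
  constructor
  · refine ⟨by omega, hypM (k+2), ?_, ?_⟩
    · intro E hE
      simp only [hypM, Finset.mem_image] at hE
      obtain ⟨P, hP, rfl⟩ := hE
      simp only [edgesG, Finset.mem_filter, Finset.mem_univ, true_and] at hP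
      obtain ⟨x, y, rfl, hxy⟩ := hP
      rw [Finset.card_compl, Finset.card_pair (adjP_ne hxy)]
      simp
    · intro φ hφ
      exact hyp_asym (by omega) φ hφ
  · rintro n ⟨hn2, M, hcard, hasym⟩
    by_contra hlt
    push_neg at hlt
    rcases Nat.lt_or_ge n (k+1) with hnk | hnk
    · -- n ≤ k : every edge is univ, so swap is an automorphism
      have hnk' : n ≤ k := by omega
      set a : Fin n := ⟨0, by omega⟩
      set b : Fin n := ⟨1, by omega⟩
      have hab : a ≠ b := by
        intro h; exact absurd (congrArg Fin.val h) (by simp [a, b])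
      set φ := Equiv.swap a b with hφ
      have huniv : ∀ E : Finset (Fin n), E ∈ M → E = Finset.univ := by
        intro E hE
        have h1 := hcard E hE
        have h2 : E.card ≤ n := by
          have := Finset.card_le_univ E
          simpa using this
        exact Finset.eq_univ_of_card E (by simp; omega)
      have hyp : ∀ E : Finset (Fin n), E ∈ M ↔ E.image ⇑φ ∈ M := by
        intro E
        constructor
        · intro hE
          have hu := huniv E hE
          rw [hu, Finset.image_univ_equiv]
          rwa [hu] at hE
        · intro hE'
          have hu' := huniv _ hE'
          have hcE : E = Finset.univ := by
            apply Finset.eq_univ_of_card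
            rw [← Finset.card_image_of_injective E φ.injective, hu', Finset.card_univ]
          rw [hcE]
          rwa [hcE, Finset.image_univ_equiv] at hE'
      have h1 := hasym φ hyp
      have h2 : φ a = b := Equiv.swap_apply_left a b
      rw [h1] at h2
      exact hab h2
    · -- n = k + 1
      have hn : n = k + 1 := by omega
      subst hn
      set P : Fin (k+1) → Prop := fun x => ({x}ᶜ : Finset (Fin (k+1))) ∈ M with hP
      classical
      have pick : ∃ a b : Fin (k+1), a ≠ b ∧ (P a ↔ P b) := by
        set v0 : Fin (k+1) := ⟨0, by omega⟩
        set v1 : Fin (k+1) := ⟨1, by omega⟩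
        set v2 : Fin (k+1) := ⟨2, by omega⟩
        have h01 : v0 ≠ v1 := by
          intro h; exact absurd (congrArg Fin.val h) (by simp [v0, v1])
        have h02 : v0 ≠ v2 := by
          intro h; exact absurd (congrArg Fin.val h) (by simp [v0, v2])
        have h12 : v1 ≠ v2 := by
          intro h; exact absurd (congrArg Fin.val h) (by simp [v1, v2])
        by_cases p0 : P v0 <;> by_cases p1 : P v1 <;> by_cases p2 : P v2
        · exact ⟨v0, v1, h01, by tauto⟩
        · exact ⟨v0, v1, h01, by tauto⟩
        · exact ⟨v0, v2, h02, by tauto⟩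
        · exact ⟨v1, v2, h12, by tauto⟩
        · exact ⟨v1, v2, h12, by tauto⟩
        · exact ⟨v0, v2, h02, by tauto⟩
        · exact ⟨v0, v1, h01, by tauto⟩
        · exact ⟨v0, v1, h01, by tauto⟩
      obtain ⟨a, b, hab, hPab⟩ := pick
      set φ := Equiv.swap a b with hφ
      have hswap : ∀ x : Fin (k+1), P (φ x) ↔ P x := by
        intro x
        rcases eq_or_ne x a with rfl | hxa
        · rw [hφ, Equiv.swap_apply_left]; tauto
        · rcases eq_or_ne x b with rfl | hxb
          · rw [hφ, Equiv.swap_apply_right]; tauto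
          · rw [hφ, Equiv.swap_apply_of_ne_of_ne hxa hxb]
      have hsingle : ∀ E : Finset (Fin (k+1)), E.card = k → ∃ x, E = {x}ᶜ := by
        intro E hE
        have h1 : Eᶜ.card = 1 := by
          rw [Finset.card_compl, hE]; simp
        obtain ⟨x, hx⟩ := Finset.card_eq_one.mp h1
        exact ⟨x, by rw [← hx, compl_compl]⟩
      have hyp : ∀ E : Finset (Fin (k+1)), E ∈ M ↔ E.image ⇑φ ∈ M := by
        intro E
        have himg : ∀ x : Fin (k+1), ({x}ᶜ : Finset (Fin (k+1))).image ⇑φ = {φ x}ᶜ := by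
          intro x
          rw [image_compl_perm, Finset.image_singleton]
        constructor
        · intro hE
          obtain ⟨x, rfl⟩ := hsingle E (hcard E hE)
          rw [himg x]
          exact (hswap x).mpr hE
        · intro hE'
          have hcE : E.card = k := by
            rw [← Finset.card_image_of_injective E φ.injective]
            exact hcard _ hE'
          obtain ⟨x, rfl⟩ := hsingle E hcE
          rw [himg x] at hE'
          exact (hswap x).mp hE'
      have h1 := hasym φ hyp
      have h2 : φ a = b := Equiv.swap_apply_left a b
      rw [h1] at h2
      exact hab h2
end

section
/- For every k ≥ 4, the k-uniform hypergraph G_k on vertex set {v₁,...,v_{2k−1}} with hyperedges M_i = {v_i, v_{i+1}, ..., v_{i+k−1}} for i = 1, ..., k has exactly two automorphisms: the identity and the reflection φ(v_i) = v_{2k−i}. -/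
/-- For every k ≥ 4, the interval k-uniform hypergraph G_k on
vertex set {0, ..., 2k-2} with hyperedges M_i = {i, ..., i+k-1} for
i = 0, ..., k-1 has exactly two automorphisms: the identity and the
reflection i ↦ 2k-2-i. Automorphisms are modelled as permutations of ℕ
fixing everything outside the vertex set. -/
theorem stmt_12 (k : ℕ) (hk : 4 ≤ k) :
    ∃ ψ : Equiv.Perm ℕ, ψ ≠ 1 ∧
      (∀ x : ℕ, x ∉ Finset.range (2 * k - 1) → ψ x = x) ∧
      (∀ i < 2 * k - 1, ψ i = 2 * k - 2 - i) ∧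
      (∀ E : Finset ℕ,
        E ∈ (Finset.range k).image (fun i => Finset.Ico i (i + k)) ↔
        E.image ⇑ψ ∈ (Finset.range k).image (fun i => Finset.Ico i (i + k))) ∧
      ∀ φ : Equiv.Perm ℕ,
        (∀ x : ℕ, x ∉ Finset.range (2 * k - 1) → φ x = x) →
        (∀ E : Finset ℕ,
          E ∈ (Finset.range k).image (fun i => Finset.Ico i (i + k)) ↔
          E.image ⇑φ ∈ (Finset.range k).image (fun i => Finset.Ico i (i + k))) →
        φ = 1 ∨ φ = ψ := by
  set f : ℕ → ℕ := fun x => if x < 2 * k - 1 then 2 * k - 2 - x else x with hf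
  have hinv : Function.Involutive f := by
    intro x; simp only [hf]; split_ifs <;> omega
  set ψ : Equiv.Perm ℕ := hinv.toPerm with hψdef
  have hψval : ∀ x, ψ x = f x := fun x => rfl
  -- image of an interval edge under ψ
  have hψimg : ∀ i < k, (Finset.Ico i (i + k)).image ⇑ψ
      = Finset.Ico (k - 1 - i) (k - 1 - i + k) := by
    intro i hi
    ext x
    simp only [Finset.mem_image, Finset.mem_Ico, hψval, hf]
    constructor
    · rintro ⟨a, ⟨ha1, ha2⟩, rfl⟩
      split_ifs <;> omega
    · rintro ⟨hx1, hx2⟩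
      refine ⟨2 * k - 2 - x, ⟨by omega, by omega⟩, ?_⟩
      rw [if_pos (by omega)]; omega
  have hψedge : ∀ E : Finset ℕ,
      E ∈ (Finset.range k).image (fun i => Finset.Ico i (i + k)) ↔
      E.image ⇑ψ ∈ (Finset.range k).image (fun i => Finset.Ico i (i + k)) := by
    intro E
    constructor
    · intro hE
      rw [Finset.mem_image] at hE ⊢
      obtain ⟨i, hi, rfl⟩ := hE
      rw [Finset.mem_range] at hi
      exact ⟨k - 1 - i, Finset.mem_range.mpr (by omega), (hψimg i hi).symm⟩
    · intro hE
      have hEE : (E.image ⇑ψ).image ⇑ψ = E := by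
        rw [Finset.image_image]
        have : (⇑ψ ∘ ⇑ψ) = id := funext fun x => hinv x
        rw [this, Finset.image_id]
      rw [Finset.mem_image] at hE
      obtain ⟨j, hj, hje⟩ := hE
      rw [Finset.mem_range] at hj
      rw [Finset.mem_image]
      refine ⟨k - 1 - j, Finset.mem_range.mpr (by omega), ?_⟩
      rw [← hEE, ← hje]
      exact (hψimg j hj).symm
  refine ⟨ψ, ?_, ?_, ?_, hψedge, ?_⟩
  · intro h
    have h0 : ψ 0 = 0 := by rw [h]; rfl
    rw [hψval, hf] at h0
    simp only [if_pos (by omega : (0:ℕ) < 2 * k - 1)] at h0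
    omega
  · intro x hx
    rw [Finset.mem_range, not_lt] at hx
    simp only [hψval, hf]
    rw [if_neg (by omega)]
  · intro i hi
    simp only [hψval, hf]
    rw [if_pos hi]
  -- uniqueness
  intro φ hfix hedge
  have hinj : Function.Injective ⇑φ := φ.injective
  set M : ℕ → Finset ℕ := fun i => Finset.Ico i (i + k) with hM
  have himg : ∀ i < k, ∃ j < k, (M i).image ⇑φ = M j := by
    intro i hi
    have h := (hedge (M i)).mp
      (Finset.mem_image.mpr ⟨i, Finset.mem_range.mpr hi, rfl⟩)
    rw [Finset.mem_image] at h
    obtain ⟨j, hj, hje⟩ := h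
    exact ⟨j, Finset.mem_range.mp hj, hje.symm⟩
  obtain ⟨j0, hj0k, hj0⟩ := himg 0 (by omega)
  have hsig : ∀ i < k, ∃ j < k, (M i).image ⇑φ = M j ∧ max j0 j - min j0 j = i := by
    intro i hi
    obtain ⟨j, hjk, hj⟩ := himg i hi
    refine ⟨j, hjk, hj, ?_⟩
    have e1 : ((M 0 ∩ M i).image ⇑φ).card = (M 0 ∩ M i).card :=
      Finset.card_image_of_injective _ hinj
    have e2 : (M 0 ∩ M i).image ⇑φ = M j0 ∩ M j := by
      rw [Finset.image_inter _ _ hinj, hj0, hj]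
    have c1 : (M 0 ∩ M i).card = k - i := by
      simp only [hM, Finset.Ico_inter_Ico, Nat.card_Ico]
      omega
    have c2 : (M j0 ∩ M j).card = min (j0 + k) (j + k) - max j0 j := by
      simp only [hM, Finset.Ico_inter_Ico, Nat.card_Ico]
    rw [e2, c2] at e1
    rw [c1] at e1
    omega
  have hj0cases : j0 = 0 ∨ j0 = k - 1 := by
    obtain ⟨j, hj1, _, hj3⟩ := hsig (k - 1) (by omega)
    omega
  -- singleton sdiff facts
  have sdiff1 : ∀ a, 1 ≤ a → a < k → M a \ M (a - 1) = {a + k - 1} := by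
    intro a h1 h2; ext x
    simp only [hM, Finset.mem_sdiff, Finset.mem_Ico, Finset.mem_singleton]
    omega
  have sdiff2 : ∀ a, 1 ≤ a → a < k → M (a - 1) \ M a = {a - 1} := by
    intro a h1 h2; ext x
    simp only [hM, Finset.mem_sdiff, Finset.mem_Ico, Finset.mem_singleton]
    omega
  have himgsd : ∀ s t : Finset ℕ, (s \ t).image ⇑φ = s.image ⇑φ \ t.image ⇑φ :=
    fun s t => Finset.image_sdiff s t hinj
  have singeq : ∀ a b : ℕ, ({a} : Finset ℕ).image ⇑φ = {b} → φ a = b := by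
    intro a b h
    rw [Finset.image_singleton, Finset.singleton_inj] at h
    exact h
  rcases hj0cases with hc | hc
  · -- identity case
    left
    have hMid : ∀ i < k, (M i).image ⇑φ = M i := by
      intro i hi
      obtain ⟨j, hj1, hj2, hj3⟩ := hsig i hi
      have : j = i := by omega
      rwa [this] at hj2
    have hlow : ∀ i, i < k - 1 → φ i = i := by
      intro i hi
      apply singeq
      have h1 : (M i \ M (i + 1)).image ⇑φ = M i \ M (i + 1) := by
        rw [himgsd, hMid i (by omega), hMid (i + 1) (by omega)]
      have h2 : M i \ M (i + 1) = {i} := by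
        have := sdiff2 (i + 1) (by omega) (by omega)
        simpa using this
      rw [h2] at h1; exact h1
    have hhigh : ∀ i, k ≤ i → i < 2 * k - 1 → φ i = i := by
      intro i hik hi
      apply singeq
      have h1 : (M (i - k + 1) \ M (i - k)).image ⇑φ = M (i - k + 1) \ M (i - k) := by
        rw [himgsd, hMid (i - k + 1) (by omega), hMid (i - k) (by omega)]
      have h2 : M (i - k + 1) \ M (i - k) = {i} := by
        have := sdiff1 (i - k + 1) (by omega) (by omega)
        have e : i - k + 1 - 1 = i - k := by omega
        rw [e] at this
        rw [this]
        congr 1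
        omega
      rw [h2] at h1; exact h1
    have hmid : φ (k - 1) = k - 1 := by
      by_contra h
      have hy : φ (φ (k - 1)) = φ (k - 1) := by
        set y := φ (k - 1) with hy
        rcases lt_or_ge y (k - 1) with h1 | h1
        · exact hlow y h1
        rcases lt_or_ge y k with h1' | h1'
        · exfalso; apply h; omega
        rcases lt_or_ge y (2 * k - 1) with h2 | h2
        · exact hhigh y h1' h2
        · exact hfix y (by rw [Finset.mem_range]; omega)
      exact h (hinj hy)
    ext x
    simp only [Equiv.Perm.coe_one, id_eq]
    rcases lt_or_ge x (2 * k - 1) with hx | hx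
    · rcases lt_or_ge x (k - 1) with h1 | h1
      · exact hlow x h1
      rcases eq_or_lt_of_le h1 with h2 | h2
      · rw [← h2]; exact hmid
      · exact hhigh x (by omega) hx
    · exact hfix x (by rw [Finset.mem_range]; omega)
  · -- reflection case
    right
    have hMrefl : ∀ i < k, (M i).image ⇑φ = M (k - 1 - i) := by
      intro i hi
      obtain ⟨j, hj1, hj2, hj3⟩ := hsig i hi
      have : j = k - 1 - i := by omega
      rwa [this] at hj2
    have hlow : ∀ i, i < k - 1 → φ i = 2 * k - 2 - i := by
      intro i hi
      apply singeq
      have h1 : (M i \ M (i + 1)).image ⇑φ = M (k - 1 - i) \ M (k - 1 - (i + 1)) := by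
        rw [himgsd, hMrefl i (by omega), hMrefl (i + 1) (by omega)]
      have h2 : M i \ M (i + 1) = {i} := by
        have := sdiff2 (i + 1) (by omega) (by omega)
        simpa using this
      have h3 : M (k - 1 - i) \ M (k - 1 - (i + 1)) = {2 * k - 2 - i} := by
        have := sdiff1 (k - 1 - i) (by omega) (by omega)
        have e : k - 1 - i - 1 = k - 1 - (i + 1) := by omega
        rw [e] at this
        rw [this]
        congr 1
        omega
      rw [h2, h3] at h1; exact h1
    have hhigh : ∀ i, k ≤ i → i < 2 * k - 1 → φ i = 2 * k - 2 - i := by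
      intro i hik hi
      apply singeq
      have h1 : (M (i - k + 1) \ M (i - k)).image ⇑φ
          = M (k - 1 - (i - k + 1)) \ M (k - 1 - (i - k)) := by
        rw [himgsd, hMrefl (i - k + 1) (by omega), hMrefl (i - k) (by omega)]
      have h2 : M (i - k + 1) \ M (i - k) = {i} := by
        have := sdiff1 (i - k + 1) (by omega) (by omega)
        have e : i - k + 1 - 1 = i - k := by omega
        rw [e] at this
        rw [this]
        congr 1
        omega
      have h3 : M (k - 1 - (i - k + 1)) \ M (k - 1 - (i - k)) = {2 * k - 2 - i} := by
        have := sdiff2 (k - 1 - (i - k)) (by omega) (by omega)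
        have e : k - 1 - (i - k) - 1 = k - 1 - (i - k + 1) := by omega
        rw [e] at this
        rw [this]
        congr 1
        omega
      rw [h2, h3] at h1; exact h1
    have hmid : φ (k - 1) = k - 1 := by
      by_contra h
      set y := φ (k - 1) with hy
      rcases lt_or_ge y (2 * k - 1) with h2 | h2
      · have hx2 : 2 * k - 2 - y ≠ k - 1 := by omega
        have hval : φ (2 * k - 2 - y) = y := by
          rcases lt_or_ge (2 * k - 2 - y) (k - 1) with h3 | h3
          · rw [hlow _ h3]; omega
          · rw [hhigh _ (by omega) (by omega)]; omega
        have := hinj (hval.trans hy)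
        omega
      · have : φ y = y := hfix y (by rw [Finset.mem_range]; omega)
        have := hinj (this.trans hy)
        omega
    ext x
    simp only [hψval, hf]
    rcases lt_or_ge x (2 * k - 1) with hx | hx
    · rw [if_pos hx]
      rcases lt_or_ge x (k - 1) with h1 | h1
      · exact hlow x h1
      rcases eq_or_lt_of_le h1 with h2 | h2
      · rw [← h2, hmid]; omega
      · exact hhigh x (by omega) hx
    · rw [if_neg (by omega)]
      exact hfix x (by rw [Finset.mem_range]; omega)
end

section
/- For every k ≥ 4, the only automorphism of the interval hypergraph G_k that maps the set {v_{2k−2}, v_{2k−1}} to itself is the identity. -/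
/-- For every k ≥ 4, the only automorphism of the interval
hypergraph G_k that maps the set of the last two vertices {2k-3, 2k-2}
to itself is the identity. -/
theorem stmt_13 (k : ℕ) (hk : 4 ≤ k) :
    ∀ φ : Equiv.Perm ℕ,
      (∀ x : ℕ, x ∉ Finset.range (2 * k - 1) → φ x = x) →
      (∀ E : Finset ℕ,
        E ∈ (Finset.range k).image (fun i => Finset.Ico i (i + k)) ↔
        E.image ⇑φ ∈ (Finset.range k).image (fun i => Finset.Ico i (i + k))) →
      ({φ (2 * k - 3), φ (2 * k - 2)} : Finset ℕ) = {2 * k - 3, 2 * k - 2} →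
      φ = 1 := by
  intro φ hout hmap hpair
  set M : ℕ → Finset ℕ := fun i => Finset.Ico i (i + k) with hM
  have hmemM : ∀ i x : ℕ, x ∈ M i ↔ i ≤ x ∧ x < i + k := by
    intro i x; simp [hM, Finset.mem_Ico]
  have hMinj : ∀ i j : ℕ, M i = M j → i = j := by
    intro i j h
    have h1 : i ∈ M j := by rw [← h, hmemM]; omega
    have h2 : j ∈ M i := by rw [h, hmemM]; omega
    rw [hmemM] at h1 h2; omega
  have himginj : ∀ i j : ℕ, (M i).image ⇑φ = (M j).image ⇑φ → i = j := by
    intro i j h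
    exact hMinj i j (Finset.image_injective φ.injective h)
  have himg : ∀ i : ℕ, i < k → ∃ m : ℕ, m < k ∧ (M i).image ⇑φ = M m := by
    intro i hi
    have hmem : M i ∈ (Finset.range k).image (fun i => Finset.Ico i (i + k)) :=
      Finset.mem_image.mpr ⟨i, Finset.mem_range.mpr hi, rfl⟩
    have h2 := (hmap (M i)).mp hmem
    rw [Finset.mem_image] at h2
    obtain ⟨m, hm, hme⟩ := h2
    exact ⟨m, Finset.mem_range.mp hm, hme.symm⟩
  have hpre : ∀ i : ℕ, i < k → ∃ m : ℕ, m < k ∧ (M m).image ⇑φ = M i := by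
    intro i hi
    have hcomp : ((M i).image ⇑φ.symm).image ⇑φ = M i := by
      rw [Finset.image_image]
      simp
    have hmem : ((M i).image ⇑φ.symm) ∈
        (Finset.range k).image (fun i => Finset.Ico i (i + k)) := by
      rw [hmap, hcomp]
      exact Finset.mem_image.mpr ⟨i, Finset.mem_range.mpr hi, rfl⟩
    rw [Finset.mem_image] at hmem
    obtain ⟨m, hm, hme⟩ := hmem
    refine ⟨m, Finset.mem_range.mp hm, ?_⟩
    have hmm : M m = (M i).image ⇑φ.symm := hme
    rw [hmm, hcomp]
  -- base case : the last edge is fixed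
  have hbase : (M (k - 1)).image ⇑φ = M (k - 1) := by
    obtain ⟨m, hm, hme⟩ := himg (k - 1) (by omega)
    obtain ⟨m', hm', hme'⟩ := himg (k - 2) (by omega)
    have hp2 : φ (2 * k - 2) = 2 * k - 3 ∨ φ (2 * k - 2) = 2 * k - 2 := by
      have h1 : φ (2 * k - 2) ∈ ({2 * k - 3, 2 * k - 2} : Finset ℕ) := by
        rw [← hpair]; simp
      simpa using h1
    have hin1 : (2 * k - 2) ∈ M (k - 1) := by rw [hmemM]; omega
    have himg1 : φ (2 * k - 2) ∈ M m := by
      rw [← hme]; exact Finset.mem_image_of_mem _ hin1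
    rcases hp2 with h | h
    · -- φ (2k-2) = 2k-3 leads to a contradiction
      exfalso
      have hp3 : φ (2 * k - 3) = 2 * k - 2 := by
        have h1 : φ (2 * k - 3) ∈ ({2 * k - 3, 2 * k - 2} : Finset ℕ) := by
          rw [← hpair]; simp
        simp at h1
        rcases h1 with h1 | h1
        · exfalso
          have := φ.injective (h1.trans h.symm)
          omega
        · exact h1
      have hin2 : (2 * k - 3) ∈ M (k - 1) := by rw [hmemM]; omega
      have himg2 : φ (2 * k - 3) ∈ M m := by
        rw [← hme]; exact Finset.mem_image_of_mem _ hin2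
      rw [hp3, hmemM] at himg2
      have hm1 : m = k - 1 := by omega
      have hin3 : (2 * k - 3) ∈ M (k - 2) := by rw [hmemM]; omega
      have himg3 : φ (2 * k - 3) ∈ M m' := by
        rw [← hme']; exact Finset.mem_image_of_mem _ hin3
      rw [hp3, hmemM] at himg3
      have hm2 : m' = k - 1 := by omega
      have hfin : (k - 2 : ℕ) = k - 1 := by
        apply himginj
        rw [hme, hme', hm1, hm2]
      omega
    · rw [h, hmemM] at himg1
      have hmk : m = k - 1 := by omega
      rw [hme, hmk]
  -- downward induction : all edges are fixed
  have hfix : ∀ d j : ℕ, j < k → k - 1 - j ≤ d → (M j).image ⇑φ = M j := by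
    intro d
    induction d with
    | zero =>
      intro j hj hd
      have : j = k - 1 := by omega
      rw [this]; exact hbase
    | succ d ih =>
      intro j hj hd
      by_cases hc : k - 1 - j ≤ d
      · exact ih j hj hc
      · have hjlt : j < k - 1 := by omega
        have IH : ∀ m, j < m → m < k → (M m).image ⇑φ = M m := by
          intro m h1 h2; exact ih m h2 (by omega)
        obtain ⟨m0, hm0, hme0⟩ := himg j (by omega)
        have hm0le : m0 ≤ j := by
          by_contra hcon
          have h1 := IH m0 (by omega) hm0
          have := himginj m0 j (h1.trans hme0.symm)
          omega
        set y := φ (j + k - 1) with hy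
        have hy1 : y ∈ M (k - 1) := by
          rw [← IH (k - 1) (by omega) (by omega)]
          exact Finset.mem_image_of_mem _ (by rw [hmemM]; omega)
        rw [hmemM] at hy1
        have hin2 : j + k - 1 ∈ M j := by rw [hmemM]; omega
        have hy2 : y ∈ M m0 := by
          rw [← hme0]; exact Finset.mem_image_of_mem _ hin2
        rw [hmemM] at hy2
        have hyj : y ∈ M j := by rw [hmemM]; omega
        obtain ⟨b, hb, hbe⟩ := hpre j (by omega)
        have hble : b ≤ j := by
          by_contra hcon
          have h1 := IH b (by omega) hb
          have := hMinj b j (h1.symm.trans hbe)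
          omega
        have hjkb : j + k - 1 ∈ M b := by
          rw [← hbe, Finset.mem_image] at hyj
          obtain ⟨u, hu, hue⟩ := hyj
          have heq : u = j + k - 1 := φ.injective (hue.trans hy)
          rwa [heq] at hu
        rw [hmemM] at hjkb
        have hbj : b = j := by omega
        rw [hbj] at hbe
        exact hbe
  have hfixall : ∀ j, j < k → (M j).image ⇑φ = M j := fun j hj =>
    hfix (k - 1) j hj (by omega)
  -- all vertices except possibly k-1 are fixed
  have hvert : ∀ x, x ≠ k - 1 → φ x = x := by
    intro x hx
    by_cases hxr : x < 2 * k - 1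
    · by_cases hlo : x < k - 1
      · have h1 : φ x ∈ M x := by
          rw [← hfixall x (by omega)]
          exact Finset.mem_image_of_mem _ (by rw [hmemM]; omega)
        have h2 : φ x ∉ M (x + 1) := by
          intro hcon
          rw [← hfixall (x + 1) (by omega), Finset.mem_image] at hcon
          obtain ⟨u, hu, hue⟩ := hcon
          have heq : u = x := φ.injective hue
          rw [heq, hmemM] at hu
          omega
        rw [hmemM] at h1
        rw [hmemM] at h2
        omega
      · have h1 : φ x ∈ M (x + 1 - k) := by
          rw [← hfixall (x + 1 - k) (by omega)]
          exact Finset.mem_image_of_mem _ (by rw [hmemM]; omega)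
        have h2 : φ x ∉ M (x - k) := by
          intro hcon
          rw [← hfixall (x - k) (by omega), Finset.mem_image] at hcon
          obtain ⟨u, hu, hue⟩ := hcon
          have heq : u = x := φ.injective hue
          rw [heq, hmemM] at hu
          omega
        rw [hmemM] at h1
        rw [hmemM] at h2
        omega
    · exact hout x (by simp [Finset.mem_range]; omega)
  have hk1 : φ (k - 1) = k - 1 := by
    by_contra hcon
    have h1 : φ (φ (k - 1)) = φ (k - 1) := hvert _ hcon
    exact hcon (φ.injective h1)
  ext x
  by_cases hx : x = k - 1
  · rw [hx]; exact hk1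
  · exact hvert x hx
end

section
/- For every k ≥ 6, the k-uniform hypergraph G*_k, obtained from the interval hypergraph G_k on {v₁,...,v_{2k−1}} by adding one new vertex x and one new hyperedge M* = {x, v₁, ..., v_{k−2}, v_{k+2}}, is asymmetric. -/
open Finset

namespace Stmt15Aux

def Mstar (k : ℕ) : Finset ℕ := insert (2 * k - 1) (insert (k + 1) (Finset.range (k - 2)))

def Edges (k : ℕ) : Finset (Finset ℕ) :=
  (Finset.range k).image (fun i => Finset.Ico i (i + k)) ∪ {Mstar k}

lemma mem_Mstar (k : ℕ) (hk : 6 ≤ k) (v : ℕ) :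
    v ∈ Mstar k ↔ v < k - 2 ∨ v = k + 1 ∨ v = 2 * k - 1 := by
  simp only [Mstar, mem_insert, mem_range]
  omega

lemma mem_Edges (k : ℕ) {E : Finset ℕ} :
    E ∈ Edges k ↔ (∃ i < k, Finset.Ico i (i + k) = E) ∨ E = Mstar k := by
  simp [Edges]
  exact Or.comm

lemma Mstar_not_interval (k : ℕ) (hk : 6 ≤ k) (i : ℕ) (hi : i < k) :
    Finset.Ico i (i + k) ≠ Mstar k := by
  intro h
  have h1 : (2 * k - 1) ∈ Mstar k := by rw [mem_Mstar k hk]; omega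
  rw [← h, mem_Ico] at h1
  omega

lemma deg_eq (k : ℕ) (hk : 6 ≤ k) (v : ℕ) :
    ((Edges k).filter (fun E => v ∈ E)).card =
      (min (v + 1) k - (v + 1 - k)) + (if v < k - 2 ∨ v = k + 1 ∨ v = 2 * k - 1 then 1 else 0) := by
  unfold Edges
  rw [filter_union, card_union_of_disjoint]
  · congr 1
    · rw [filter_image, card_image_of_injective]
      · have : ((Finset.range k).filter fun i => v ∈ Finset.Ico i (i + k)) =
            Finset.Ico (v + 1 - k) (min (v + 1) k) := by
          ext a
          simp only [mem_filter, mem_range, mem_Ico, lt_min_iff]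
          omega
        rw [this, Nat.card_Ico]
      · intro i j hij
        have hij' : Finset.Ico i (i + k) = Finset.Ico j (j + k) := hij
        have hi : i ∈ Finset.Ico i (i + k) := by rw [mem_Ico]; omega
        have hj : j ∈ Finset.Ico j (j + k) := by rw [mem_Ico]; omega
        rw [hij', mem_Ico] at hi
        rw [← hij', mem_Ico] at hj
        omega
    · rw [filter_singleton]
      by_cases h : v ∈ Mstar k
      · rw [if_pos h, if_pos ((mem_Mstar k hk v).1 h), card_singleton]
      · rw [if_neg h, if_neg (fun hc => h ((mem_Mstar k hk v).2 hc)), card_empty]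
  · rw [Finset.disjoint_right]
    intro E hE hE'
    rw [mem_filter, mem_singleton] at hE
    rw [mem_filter, mem_image] at hE'
    obtain ⟨⟨i, hi, hiE⟩, -⟩ := hE'
    exact Mstar_not_interval k hk i (by simpa using hi) (hiE.trans hE.1)

lemma sep (k : ℕ) (hk : 6 ≤ k) {v w : ℕ} (hv : v < 2 * k) (hw : w < 2 * k)
    (hd : ((Edges k).filter (fun E => v ∈ E)).card = ((Edges k).filter (fun E => w ∈ E)).card)
    (hm : v ∈ Mstar k ↔ w ∈ Mstar k) (hlt : v < k ↔ w < k) : v = w := by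
  rw [deg_eq k hk, deg_eq k hk] at hd
  rw [mem_Mstar k hk, mem_Mstar k hk] at hm
  split_ifs at hd <;> omega

end Stmt15Aux

open Stmt15Aux in
/-- For every k ≥ 6, the k-uniform hypergraph G*_k obtained from
the interval hypergraph G_k on {0, ..., 2k-2} by adding the new vertex 2k-1
(standing for x) and the hyperedge M* = {x} ∪ {v₁,...,v_{k-2}} ∪ {v_{k+2}}
(i.e. {2k-1} ∪ {0,...,k-3} ∪ {k+1}) is asymmetric. -/
theorem stmt_15 (k : ℕ) (hk : 6 ≤ k) :
    ∀ φ : Equiv.Perm ℕ,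
      (∀ x : ℕ, x ∉ Finset.range (2 * k) → φ x = x) →
      (∀ E : Finset ℕ,
        E ∈ ((Finset.range k).image (fun i => Finset.Ico i (i + k)) ∪
              {insert (2 * k - 1) (insert (k + 1) (Finset.range (k - 2)))}) ↔
        E.image ⇑φ ∈ ((Finset.range k).image (fun i => Finset.Ico i (i + k)) ∪
              {insert (2 * k - 1) (insert (k + 1) (Finset.range (k - 2)))})) →
      φ = 1 := by
  intro φ h1 h2
  have hS : ∀ E : Finset ℕ, E ∈ Edges k ↔ E.image ⇑φ ∈ Edges k := h2
  -- φ maps range 2k to itself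
  have hmem : ∀ v, v < 2 * k → φ v < 2 * k := by
    intro v hv
    by_contra h
    push_neg at h
    have h2' := h1 (φ v) (by simp only [mem_range]; omega)
    have := φ.injective h2'
    omega
  -- degree invariance
  have hdeg : ∀ v, ((Edges k).filter (fun E => φ v ∈ E)).card =
      ((Edges k).filter (fun E => v ∈ E)).card := by
    intro v
    have key : (Edges k).filter (fun E => φ v ∈ E) =
        ((Edges k).filter (fun E => v ∈ E)).image (fun E => E.image ⇑φ) := by
      ext F
      simp only [mem_image, mem_filter]
      constructor
      · rintro ⟨hF, hvF⟩
        refine ⟨F.image ⇑φ.symm, ⟨?_, ?_⟩, ?_⟩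
        · rw [hS (F.image ⇑φ.symm), image_image, Equiv.self_comp_symm, image_id]
          exact hF
        · rw [mem_image]
          exact ⟨φ v, hvF, φ.symm_apply_apply v⟩
        · rw [image_image, Equiv.self_comp_symm, image_id]
      · rintro ⟨E, ⟨hE, hvE⟩, rfl⟩
        exact ⟨(hS E).1 hE, mem_image_of_mem _ hvE⟩
    rw [key, card_image_of_injective _ (Finset.image_injective φ.injective)]
  -- φ fixes k-1
  have hk1 : φ (k - 1) = k - 1 := by
    have h := hdeg (k - 1)
    have hlt := hmem (k - 1) (by omega)
    rw [deg_eq k hk, deg_eq k hk] at h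
    split_ifs at h <;> omega
  -- φ fixes Mstar as a set
  have hMstar : (Mstar k).image ⇑φ = Mstar k := by
    have h := (hS (Mstar k)).1 (by rw [mem_Edges]; exact Or.inr rfl)
    rw [mem_Edges] at h
    rcases h with ⟨i, hi, hEq⟩ | h
    · exfalso
      have hk1mem : (k - 1 : ℕ) ∈ (Mstar k).image ⇑φ := by
        rw [← hEq, mem_Ico]; omega
      rw [mem_image] at hk1mem
      obtain ⟨w, hw, hww⟩ := hk1mem
      have : w = k - 1 := φ.injective (by rw [hww, hk1])
      subst this
      rw [mem_Mstar k hk] at hw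
      omega
    · exact h
  have hMiff : ∀ v, v ∈ Mstar k ↔ φ v ∈ Mstar k := by
    intro v
    constructor
    · intro h; rw [← hMstar]; exact mem_image_of_mem _ h
    · intro h
      rw [← hMstar, mem_image] at h
      obtain ⟨w, hw, he⟩ := h
      rwa [← φ.injective he]
  -- φ fixes 0
  have h0 : φ 0 = 0 := by
    have h := hdeg 0
    have hlt := hmem 0 (by omega)
    have hm := (hMiff 0).1 (by rw [mem_Mstar k hk]; omega)
    rw [mem_Mstar k hk] at hm
    rw [deg_eq k hk, deg_eq k hk] at h
    split_ifs at h <;> omega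
  -- φ fixes M₀ = Ico 0 k as a set
  have hM0 : (Finset.Ico 0 k).image ⇑φ = Finset.Ico 0 k := by
    have h := (hS (Finset.Ico 0 k)).1 (by
      rw [mem_Edges]
      exact Or.inl ⟨0, by omega, by simp⟩)
    rw [mem_Edges] at h
    rcases h with ⟨i, hi, hEq⟩ | h
    · have h0m : (0 : ℕ) ∈ (Finset.Ico 0 k).image ⇑φ := by
        rw [mem_image]
        exact ⟨0, by rw [mem_Ico]; omega, h0⟩
      rw [← hEq, mem_Ico] at h0m
      have hi0 : i = 0 := by omega
      rw [← hEq, hi0]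
      norm_num
    · exfalso
      have : Finset.Ico 0 k = Mstar k := by
        apply Finset.image_injective φ.injective
        rw [h, hMstar]
      have h2k : (2 * k - 1 : ℕ) ∈ Mstar k := by rw [mem_Mstar k hk]; omega
      rw [← this, mem_Ico] at h2k
      omega
  have hM0iff : ∀ v, v ∈ Finset.Ico 0 k ↔ φ v ∈ Finset.Ico 0 k := by
    intro v
    constructor
    · intro h; rw [← hM0]; exact mem_image_of_mem _ h
    · intro h
      rw [← hM0, mem_image] at h
      obtain ⟨w, hw, he⟩ := h
      rwa [← φ.injective he]
  -- conclude
  ext v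
  show φ v = v
  by_cases hv : v < 2 * k
  · refine sep k hk (hmem v hv) hv (hdeg v) ((hMiff v).symm) ?_
    have := (hM0iff v).symm
    simp only [mem_Ico, Nat.zero_le, true_and] at this
    exact this
  · exact h1 v (by simp only [mem_range]; omega)
end

section
/- For every k ≥ 6, every non-trivial sub-k-graph of G*_k with at least two vertices has an involution, i.e. a non-identity automorphism φ with φ∘φ = id. -/
/-- The reflection map on `{0,...,2k-2}`, identity elsewhere. -/
def stmt16_rf (k : ℕ) : ℕ → ℕ := fun v => if v ≤ 2 * k - 2 then 2 * k - 2 - v else v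

lemma stmt16_rf_inv (k : ℕ) : Function.Involutive (stmt16_rf k) := by
  intro v
  unfold stmt16_rf
  split_ifs <;> omega

lemma stmt16_rf_image (k i : ℕ) (hk : 6 ≤ k) (hi : i < k) :
    (Finset.Ico i (i + k)).image (stmt16_rf k) =
      Finset.Ico (k - 1 - i) (k - 1 - i + k) := by
  ext a
  simp only [Finset.mem_image, Finset.mem_Ico]
  constructor
  · rintro ⟨y, hy, rfl⟩
    unfold stmt16_rf
    rw [if_pos (by omega)]
    omega
  · intro ha
    refine ⟨2 * k - 2 - a, by omega, ?_⟩
    unfold stmt16_rf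
    rw [if_pos (by omega)]
    omega

/-- From a forward edge-preservation property of an involution, get the iff. -/
lemma stmt16_invol_iff (φ : Equiv.Perm ℕ) (hsq : φ * φ = 1) (M' : Finset (Finset ℕ))
    (h : ∀ E ∈ M', E.image ⇑φ ∈ M') :
    ∀ E : Finset ℕ, E ∈ M' ↔ E.image ⇑φ ∈ M' := by
  have hid : ∀ x, φ (φ x) = x := by
    intro x
    have := congrArg (fun p : Equiv.Perm ℕ => p x) hsq
    simpa using this
  intro E
  constructor
  · exact h E
  · intro hEM
    have h2 := h _ hEM
    rwa [Finset.image_image, show (⇑φ ∘ ⇑φ) = id from funext hid, Finset.image_id] at h2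

/-- If two distinct vertices of `X'` lie in exactly the same edges of `M'`,
then swapping them is an involution of the sub-hypergraph. -/
lemma stmt16_swap_case (X' : Finset ℕ) (M' : Finset (Finset ℕ))
    (a b : ℕ) (ha : a ∈ X') (hb : b ∈ X') (hab : a ≠ b)
    (htr : ∀ E ∈ M', (a ∈ E ↔ b ∈ E)) :
    ∃ φ : Equiv.Perm ℕ, φ ≠ 1 ∧ φ * φ = 1 ∧
      (∀ x : ℕ, x ∉ X' → φ x = x) ∧
      ∀ E : Finset ℕ, E ∈ M' ↔ E.image ⇑φ ∈ M' := by
  have key : ∀ E ∈ M', E.image ⇑(Equiv.swap a b) = E := by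
    intro E hEM
    ext y
    simp only [Finset.mem_image]
    constructor
    · rintro ⟨z, hz, rfl⟩
      rcases eq_or_ne z a with rfl | hza
      · rw [Equiv.swap_apply_left]; exact (htr E hEM).mp hz
      rcases eq_or_ne z b with rfl | hzb
      · rw [Equiv.swap_apply_right]; exact (htr E hEM).mpr hz
      · rwa [Equiv.swap_apply_of_ne_of_ne hza hzb]
    · intro hy
      refine ⟨Equiv.swap a b y, ?_, Equiv.swap_apply_self a b y⟩
      rcases eq_or_ne y a with rfl | hya
      · rw [Equiv.swap_apply_left]; exact (htr E hEM).mp hy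
      rcases eq_or_ne y b with rfl | hyb
      · rw [Equiv.swap_apply_right]; exact (htr E hEM).mpr hy
      · rwa [Equiv.swap_apply_of_ne_of_ne hya hyb]
  refine ⟨Equiv.swap a b, ?_, Equiv.swap_mul_self a b, ?_, ?_⟩
  · intro h
    have h2 : Equiv.swap a b a = a := by rw [h]; rfl
    rw [Equiv.swap_apply_left] at h2
    exact hab h2.symm
  · intro x hx
    exact Equiv.swap_apply_of_ne_of_ne (fun h => hx (h ▸ ha)) (fun h => hx (h ▸ hb))
  · exact stmt16_invol_iff _ (Equiv.swap_mul_self a b) M'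
      (fun E hEM => by rwa [key E hEM])

/-- For every k ≥ 6, every non-trivial sub-k-graph of G*_k with
at least two vertices has an involution (a non-identity automorphism whose
square is the identity). Vertices of G*_k are {0,...,2k-1} with x = 2k-1. -/
theorem stmt_16 (k : ℕ) (hk : 6 ≤ k)
    (X' : Finset ℕ) (M' : Finset (Finset ℕ))
    (hX : X' ⊆ Finset.range (2 * k))
    (hMsub : M' ⊆ (Finset.range k).image (fun i => Finset.Ico i (i + k)) ∪
              {insert (2 * k - 1) (insert (k + 1) (Finset.range (k - 2)))})
    (hE : ∀ E ∈ M', E ⊆ X')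
    (hcard : 2 ≤ X'.card)
    (hnontriv : ¬(X' = Finset.range (2 * k) ∧
      M' = (Finset.range k).image (fun i => Finset.Ico i (i + k)) ∪
            {insert (2 * k - 1) (insert (k + 1) (Finset.range (k - 2)))})) :
    ∃ φ : Equiv.Perm ℕ, φ ≠ 1 ∧ φ * φ = 1 ∧
      (∀ x : ℕ, x ∉ X' → φ x = x) ∧
      ∀ E : Finset ℕ, E ∈ M' ↔ E.image ⇑φ ∈ M' := by
  by_cases hall : ∀ j, j < k → Finset.Ico j (j + k) ∈ M'
  · by_cases hstar : insert (2 * k - 1) (insert (k + 1) (Finset.range (k - 2))) ∈ M'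
    · -- everything present: contradiction with non-triviality
      exfalso
      apply hnontriv
      constructor
      · apply Finset.Subset.antisymm hX
        intro v hv
        rw [Finset.mem_range] at hv
        by_cases hv2 : v = 2 * k - 1
        · exact hE _ hstar (by
            simp only [Finset.mem_insert, Finset.mem_range]
            omega)
        · obtain ⟨i, hi1, hi2, hi3⟩ : ∃ i, i < k ∧ i ≤ v ∧ v < i + k := by
            rcases lt_or_ge v k with h | h
            · exact ⟨0, by omega, by omega, by omega⟩
            · exact ⟨v - k + 1, by omega, by omega, by omega⟩
          exact hE _ (hall i hi1) (Finset.mem_Ico.mpr ⟨hi2, hi3⟩)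
      · apply Finset.Subset.antisymm hMsub
        intro E hEu
        rcases Finset.mem_union.mp hEu with h | h
        · obtain ⟨i, hi, rfl⟩ := Finset.mem_image.mp h
          exact hall i (Finset.mem_range.mp hi)
        · rw [Finset.mem_singleton] at h
          exact h ▸ hstar
    · -- all intervals present, M* absent: reflection
      have hM : M' = (Finset.range k).image (fun i => Finset.Ico i (i + k)) := by
        apply Finset.Subset.antisymm
        · intro E hEM
          rcases Finset.mem_union.mp (hMsub hEM) with h | h
          · exact h
          · rw [Finset.mem_singleton] at h
            exact absurd (h ▸ hEM) hstar
        · intro E hEu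
          obtain ⟨i, hi, rfl⟩ := Finset.mem_image.mp hEu
          exact hall i (Finset.mem_range.mp hi)
      have hX'mem : ∀ v, v < 2 * k - 1 → v ∈ X' := by
        intro v hv
        obtain ⟨i, hi1, hi2, hi3⟩ : ∃ i, i < k ∧ i ≤ v ∧ v < i + k := by
          rcases lt_or_ge v k with h | h
          · exact ⟨0, by omega, by omega, by omega⟩
          · exact ⟨v - k + 1, by omega, by omega, by omega⟩
        exact hE _ (hall i hi1) (Finset.mem_Ico.mpr ⟨hi2, hi3⟩)
      set φ : Equiv.Perm ℕ := Function.Involutive.toPerm (stmt16_rf k) (stmt16_rf_inv k)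
        with hφ
      have hcoe : ⇑φ = stmt16_rf k := rfl
      have hsq : φ * φ = 1 := by
        ext x
        simp only [Equiv.Perm.mul_apply, Equiv.Perm.one_apply, hcoe]
        exact stmt16_rf_inv k x
      have hfwd : ∀ E ∈ M', E.image ⇑φ ∈ M' := by
        intro E hEM
        rw [hM] at hEM
        obtain ⟨i, hi, rfl⟩ := Finset.mem_image.mp hEM
        rw [Finset.mem_range] at hi
        rw [hcoe, stmt16_rf_image k i hk hi, hM]
        exact Finset.mem_image.mpr ⟨k - 1 - i, Finset.mem_range.mpr (by omega), rfl⟩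
      refine ⟨φ, ?_, hsq, ?_, stmt16_invol_iff φ hsq M' hfwd⟩
      · intro h
        have h0 : φ 0 = 0 := by rw [h]; rfl
        rw [hcoe] at h0
        unfold stmt16_rf at h0
        rw [if_pos (by omega)] at h0
        omega
      · intro x hx
        have hbig : ¬ x < 2 * k - 1 := fun h => hx (hX'mem x h)
        rw [hcoe]
        unfold stmt16_rf
        rw [if_neg (by omega)]
  · push_neg at hall
    obtain ⟨j, hjk, hjm⟩ := hall
    by_cases hstar : insert (2 * k - 1) (insert (k + 1) (Finset.range (k - 2))) ∈ M'
    · -- M* present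
      by_cases hmid : ∃ j', 1 ≤ j' ∧ j' ≤ k - 3 ∧ Finset.Ico j' (j' + k) ∉ M'
      · -- a middle interval missing: swap (j'-1, j'), both lie in M*
        obtain ⟨j', hj1, hj3, hj'm⟩ := hmid
        have ha : j' - 1 ∈ X' := hE _ hstar (by
          simp only [Finset.mem_insert, Finset.mem_range]; omega)
        have hb : j' ∈ X' := hE _ hstar (by
          simp only [Finset.mem_insert, Finset.mem_range]; omega)
        apply stmt16_swap_case X' M' (j' - 1) j' ha hb (by omega)
        intro E hEM
        rcases Finset.mem_union.mp (hMsub hEM) with h | h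
        · obtain ⟨i, hi, rfl⟩ := Finset.mem_image.mp h
          rw [Finset.mem_range] at hi
          have hij : i ≠ j' := by rintro rfl; exact hj'm hEM
          simp only [Finset.mem_Ico]
          omega
        · rw [Finset.mem_singleton] at h
          subst h
          simp only [Finset.mem_insert, Finset.mem_range]
          omega
      · push_neg at hmid
        by_cases h0 : Finset.Ico 0 (0 + k) ∈ M'
        · by_cases hk1 : Finset.Ico (k - 1) (k - 1 + k) ∈ M'
          · -- only M_{k-2} can be missing: swap (2k-3, 2k-2), both in M_{k-1}
            have hne0 : j ≠ 0 := by rintro rfl; exact hjm h0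
            have hnek1 : j ≠ k - 1 := by
              intro h; rw [h] at hjm; exact hjm hk1
            have hnm : ¬(1 ≤ j ∧ j ≤ k - 3) := fun h => hjm (hmid j h.1 h.2)
            have hjeq : j = k - 2 := by omega
            rw [hjeq] at hjm
            have ha : 2 * k - 3 ∈ X' := hE _ hk1 (Finset.mem_Ico.mpr ⟨by omega, by omega⟩)
            have hb : 2 * k - 2 ∈ X' := hE _ hk1 (Finset.mem_Ico.mpr ⟨by omega, by omega⟩)
            apply stmt16_swap_case X' M' (2 * k - 3) (2 * k - 2) ha hb (by omega)
            intro E hEM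
            rcases Finset.mem_union.mp (hMsub hEM) with h | h
            · obtain ⟨i, hi, rfl⟩ := Finset.mem_image.mp h
              rw [Finset.mem_range] at hi
              have hij : i ≠ k - 2 := by
                intro h2; rw [h2] at hEM; exact hjm hEM
              simp only [Finset.mem_Ico]
              omega
            · rw [Finset.mem_singleton] at h
              subst h
              simp only [Finset.mem_insert, Finset.mem_range]
              omega
          · -- M_{k-1} missing: swap (k-2, k-1), both in M_0
            have ha : k - 2 ∈ X' := hE _ h0 (Finset.mem_Ico.mpr ⟨by omega, by omega⟩)
            have hb : k - 1 ∈ X' := hE _ h0 (Finset.mem_Ico.mpr ⟨by omega, by omega⟩)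
            apply stmt16_swap_case X' M' (k - 2) (k - 1) ha hb (by omega)
            intro E hEM
            rcases Finset.mem_union.mp (hMsub hEM) with h | h
            · obtain ⟨i, hi, rfl⟩ := Finset.mem_image.mp h
              rw [Finset.mem_range] at hi
              have hij : i ≠ k - 1 := by
                intro h2; rw [h2] at hEM; exact hk1 hEM
              simp only [Finset.mem_Ico]
              omega
            · rw [Finset.mem_singleton] at h
              subst h
              simp only [Finset.mem_insert, Finset.mem_range]
              omega
        · -- M_0 missing: swap (k-1, k), both in M_1 (which is present since 1 ≤ k-3)
          have h1 : Finset.Ico 1 (1 + k) ∈ M' := hmid 1 le_rfl (by omega)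
          have ha : k - 1 ∈ X' := hE _ h1 (Finset.mem_Ico.mpr ⟨by omega, by omega⟩)
          have hb : k ∈ X' := hE _ h1 (Finset.mem_Ico.mpr ⟨by omega, by omega⟩)
          apply stmt16_swap_case X' M' (k - 1) k ha hb (by omega)
          intro E hEM
          rcases Finset.mem_union.mp (hMsub hEM) with h | h
          · obtain ⟨i, hi, rfl⟩ := Finset.mem_image.mp h
            rw [Finset.mem_range] at hi
            have hij : i ≠ 0 := by
              intro h2; rw [h2] at hEM; exact h0 hEM
            simp only [Finset.mem_Ico]
            omega
          · rw [Finset.mem_singleton] at h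
            subst h
            simp only [Finset.mem_insert, Finset.mem_range]
            omega
    · -- M* absent
      by_cases habove : ∃ i, i < k ∧ j < i ∧ Finset.Ico i (i + k) ∈ M'
      · -- some interval above the missing one: swap (j+k-1, j+k)
        obtain ⟨i0, hi0k, hji0, hi0M⟩ := habove
        have ha : j + k - 1 ∈ X' := hE _ hi0M (Finset.mem_Ico.mpr ⟨by omega, by omega⟩)
        have hb : j + k ∈ X' := hE _ hi0M (Finset.mem_Ico.mpr ⟨by omega, by omega⟩)
        apply stmt16_swap_case X' M' (j + k - 1) (j + k) ha hb (by omega)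
        intro E hEM
        rcases Finset.mem_union.mp (hMsub hEM) with h | h
        · obtain ⟨i, hi, rfl⟩ := Finset.mem_image.mp h
          rw [Finset.mem_range] at hi
          have hij : i ≠ j := by rintro rfl; exact hjm hEM
          simp only [Finset.mem_Ico]
          omega
        · rw [Finset.mem_singleton] at h
          exact absurd (h ▸ hEM) hstar
      · push_neg at habove
        by_cases hsome : ∃ i, i < k ∧ Finset.Ico i (i + k) ∈ M'
        · -- all present intervals are below j: swap (j-1, j)
          obtain ⟨i0, hi0k, hi0M⟩ := hsome
          have hij0 : i0 ≠ j := by rintro rfl; exact hjm hi0M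
          have hi0j : i0 < j := by
            rcases lt_or_ge i0 j with h | h
            · exact h
            · exact absurd hi0M (habove i0 hi0k (by omega))
          have ha : j - 1 ∈ X' := hE _ hi0M (Finset.mem_Ico.mpr ⟨by omega, by omega⟩)
          have hb : j ∈ X' := hE _ hi0M (Finset.mem_Ico.mpr ⟨by omega, by omega⟩)
          apply stmt16_swap_case X' M' (j - 1) j ha hb (by omega)
          intro E hEM
          rcases Finset.mem_union.mp (hMsub hEM) with h | h
          · obtain ⟨i, hi, rfl⟩ := Finset.mem_image.mp h
            rw [Finset.mem_range] at hi
            have hij : i ≠ j := by rintro rfl; exact hjm hEM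
            simp only [Finset.mem_Ico]
            omega
          · rw [Finset.mem_singleton] at h
            exact absurd (h ▸ hEM) hstar
        · -- M' is empty: swap any two vertices of X'
          have hM'empty : ∀ E, E ∉ M' := by
            intro E hEM
            rcases Finset.mem_union.mp (hMsub hEM) with h | h
            · obtain ⟨i, hi, rfl⟩ := Finset.mem_image.mp h
              exact hsome ⟨i, Finset.mem_range.mp hi, hEM⟩
            · rw [Finset.mem_singleton] at h
              exact hstar (h ▸ hEM)
          obtain ⟨a, ha, b, hb, hab⟩ := Finset.one_lt_card.mp hcard
          exact stmt16_swap_case X' M' a b ha hb hab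
            (fun E hEM => absurd hEM (hM'empty E))
end

section
/- For k ≥ 4, every non-trivial sub-k-graph of the interval hypergraph G_k with at least two vertices has an involution (a non-identity automorphism of order 2). -/
/-- Auxiliary lemma: if `a ≠ b` are two vertices of `X'` that belong to exactly
the same edges of `M'`, then the swap of `a` and `b` is an involution. -/
lemma swap_involution (X' : Finset ℕ) (M' : Finset (Finset ℕ))
    (a b : ℕ) (ha : a ∈ X') (hb : b ∈ X') (hab : a ≠ b)
    (hsame : ∀ E ∈ M', (a ∈ E ↔ b ∈ E)) :
    ∃ φ : Equiv.Perm ℕ, φ ≠ 1 ∧ φ * φ = 1 ∧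
      (∀ x : ℕ, x ∉ X' → φ x = x) ∧
      ∀ E : Finset ℕ, E ∈ M' ↔ E.image ⇑φ ∈ M' := by
  have hmemswap : ∀ E ∈ M', ∀ y : ℕ, Equiv.swap a b y ∈ E ↔ y ∈ E := by
    intro E hEm y
    rcases eq_or_ne y a with rfl | hya
    · rw [Equiv.swap_apply_left]; exact (hsame E hEm).symm
    rcases eq_or_ne y b with rfl | hyb
    · rw [Equiv.swap_apply_right]; exact hsame E hEm
    · rw [Equiv.swap_apply_of_ne_of_ne hya hyb]
  have himg : ∀ E ∈ M', E.image ⇑(Equiv.swap a b) = E := by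
    intro E hEm
    ext y
    rw [Finset.mem_image]
    constructor
    · rintro ⟨x, hx, rfl⟩
      exact (hmemswap E hEm x).mpr hx
    · intro hy
      exact ⟨Equiv.swap a b y, (hmemswap E hEm y).mpr hy, Equiv.swap_apply_self a b y⟩
  refine ⟨Equiv.swap a b, ?_, Equiv.swap_mul_self a b, ?_, ?_⟩
  · intro h
    have : Equiv.swap a b a = (1 : Equiv.Perm ℕ) a := by rw [h]
    rw [Equiv.swap_apply_left, Equiv.Perm.one_apply] at this
    exact hab this.symm
  · intro x hx
    exact Equiv.swap_apply_of_ne_of_ne (fun h => hx (h ▸ ha)) (fun h => hx (h ▸ hb))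
  · intro E
    constructor
    · intro h; rw [himg E h]; exact h
    · intro h
      have h2 := himg _ h
      rw [Finset.image_image] at h2
      have h3 : ⇑(Equiv.swap a b) ∘ ⇑(Equiv.swap a b) = id :=
        funext (Equiv.swap_apply_self a b)
      rw [h3, Finset.image_id] at h2
      rw [h2]; exact h

/-- For every k ≥ 4, every non-trivial sub-k-graph of the
interval hypergraph G_k (vertices {0,...,2k-2}, hyperedges {i,...,i+k-1} for
0 ≤ i ≤ k-1) with at least two vertices has an involution. -/
theorem stmt_18 (k : ℕ) (hk : 4 ≤ k)
    (X' : Finset ℕ) (M' : Finset (Finset ℕ))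
    (hX : X' ⊆ Finset.range (2 * k - 1))
    (hMsub : M' ⊆ (Finset.range k).image (fun i => Finset.Ico i (i + k)))
    (hE : ∀ E ∈ M', E ⊆ X')
    (hcard : 2 ≤ X'.card)
    (hnontriv : ¬(X' = Finset.range (2 * k - 1) ∧
      M' = (Finset.range k).image (fun i => Finset.Ico i (i + k)))) :
    ∃ φ : Equiv.Perm ℕ, φ ≠ 1 ∧ φ * φ = 1 ∧
      (∀ x : ℕ, x ∉ X' → φ x = x) ∧
      ∀ E : Finset ℕ, E ∈ M' ↔ E.image ⇑φ ∈ M' := by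
  rcases Finset.eq_empty_or_nonempty M' with hM | hM
  · -- M' empty: swap any two vertices of X'
    obtain ⟨a, ha, b, hb, hab⟩ := Finset.one_lt_card.mp hcard
    exact swap_involution X' M' a b ha hb hab (by simp [hM])
  · -- M' nonempty: get an edge index i with E_i ∈ M'
    obtain ⟨E₀, hE₀⟩ := hM
    obtain ⟨i, hi, rfl⟩ := Finset.mem_image.mp (hMsub hE₀)
    rw [Finset.mem_range] at hi
    -- get an index j with E_j ∉ M'
    have hj : ∃ j < k, Finset.Ico j (j + k) ∉ M' := by
      by_contra hcon
      push_neg at hcon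
      apply hnontriv
      have hMeq : M' = (Finset.range k).image (fun i => Finset.Ico i (i + k)) := by
        apply Finset.Subset.antisymm hMsub
        intro E hEim
        obtain ⟨j, hjr, rfl⟩ := Finset.mem_image.mp hEim
        exact hcon j (Finset.mem_range.mp hjr)
      refine ⟨?_, hMeq⟩
      apply Finset.Subset.antisymm hX
      intro x hx
      rw [Finset.mem_range] at hx
      set j := if x < k then 0 else x - k + 1 with hjdef
      have hj1 : j < k := by simp only [hjdef]; split <;> omega
      have hj2 : x ∈ Finset.Ico j (j + k) := by
        rw [Finset.mem_Ico]; simp only [hjdef]; split <;> omega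
      exact hE _ (hcon j hj1) hj2
    obtain ⟨j, hjk, hjnot⟩ := hj
    -- every edge of M' has index ≠ j
    have hne : ∀ E ∈ M', ∃ i' < k, i' ≠ j ∧ E = Finset.Ico i' (i' + k) := by
      intro E hEm
      obtain ⟨i', hi', rfl⟩ := Finset.mem_image.mp (hMsub hEm)
      rw [Finset.mem_range] at hi'
      refine ⟨i', hi', ?_, rfl⟩
      rintro rfl
      exact hjnot hEm
    have hij : i ≠ j := by rintro rfl; exact hjnot hE₀
    rcases lt_or_gt_of_ne hij with hlt | hgt
    · -- i < j : use vertices j-1 and j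
      have hmemaE : j - 1 ∈ Finset.Ico i (i + k) := by rw [Finset.mem_Ico]; omega
      have hmembE : j ∈ Finset.Ico i (i + k) := by rw [Finset.mem_Ico]; omega
      refine swap_involution X' M' (j - 1) j (hE _ hE₀ hmemaE) (hE _ hE₀ hmembE)
        (by omega) ?_
      intro E hEm
      obtain ⟨i', hi', hi'j, rfl⟩ := hne E hEm
      rw [Finset.mem_Ico, Finset.mem_Ico]
      omega
    · -- i > j : use vertices j+k-1 and j+k
      have hmemaE : j + k - 1 ∈ Finset.Ico i (i + k) := by rw [Finset.mem_Ico]; omega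
      have hmembE : j + k ∈ Finset.Ico i (i + k) := by rw [Finset.mem_Ico]; omega
      refine swap_involution X' M' (j + k - 1) (j + k) (hE _ hE₀ hmemaE)
        (hE _ hE₀ hmembE) (by omega) ?_
      intro E hEm
      obtain ⟨i', hi', hi'j, rfl⟩ := hne E hEm
      rw [Finset.mem_Ico, Finset.mem_Ico]
      omega
end
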